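/- Let (W,S) be a Coxeter system. For any u, v ∈ W, the maximum of {u'v : u' ≤ u}, the maximum of {uv' : v' ≤ v}, and the maximum of {u'v' : u' ≤ u, v' ≤ v} (all with respect to the Bruhat order) exist and are all equal. This common element is denoted u ∘ v, the optimization operator. -/

import Mathlib

/-- The Bruhat order on a Coxeter group. -/
def bruhatLE {B W : Type*} [Group W] {M : CoxeterMatrix B} (cs : CoxeterSystem M W)
    (u v : W) : Prop :=
  ∃ ω : List B, cs.IsReduced ω ∧ cs.wordProd ω = v ∧
    ∃ ω' : List B, ω'.Sublist ω ∧ cs.IsReduced ω' ∧ cs.wordProd ω' = u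

open List

namespace BruhatAux

open CoxeterSystem

variable {B W : Type*} [Group W] {M : CoxeterMatrix B} (cs : CoxeterSystem M W)

local prefix:100 "σ" => cs.simple
local prefix:100 "π" => cs.wordProd
local prefix:100 "ℒ" => cs.length
local prefix:100 "ris" => cs.rightInvSeq

open scoped Classical

/-- The sign: product over the list of `-1` for each occurrence of `t`. -/
noncomputable def sgn (l : List W) (t : W) : ℤˣ :=
  (l.map fun x => if x = t then (-1 : ℤˣ) else 1).prod

@[simp] lemma sgn_nil (t : W) : sgn ([] : List W) t = 1 := rfl

lemma sgn_cons (a : W) (l : List W) (t : W) :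
    sgn (a :: l) t = (if a = t then (-1 : ℤˣ) else 1) * sgn l t := by
  simp [sgn]

lemma sgn_append (l l' : List W) (t : W) :
    sgn (l ++ l') t = sgn l t * sgn l' t := by
  simp [sgn]

lemma sgn_eq_one_of_not_mem {l : List W} {t : W} (h : t ∉ l) : sgn l t = 1 := by
  induction l with
  | nil => rfl
  | cons a l ih =>
    rw [sgn_cons, if_neg (by rintro rfl; exact h mem_cons_self),
      ih (fun hm => h (mem_cons_of_mem a hm)), one_mul]

lemma mem_of_sgn_ne_one {l : List W} {t : W} (h : sgn l t ≠ 1) : t ∈ l := by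
  by_contra hm; exact h (sgn_eq_one_of_not_mem hm)

/-- The basic involution on `W × ℤˣ`. -/
noncomputable def eta (i : B) : Equiv.Perm (W × ℤˣ) :=
  Function.Involutive.toPerm
    (fun p => (σ i * p.1 * σ i, if p.1 = σ i then -p.2 else p.2))
    (by
      intro p
      obtain ⟨x, e⟩ := p
      by_cases hx : x = σ i
      · subst hx
        simp [cs.simple_mul_simple_self, cs.simple_mul_simple_cancel_left]
      · have h2 : σ i * x * σ i ≠ σ i := by
          intro h
          apply hx
          have := congrArg (fun z => σ i * z * σ i) h
          simpa [mul_assoc, cs.simple_mul_simple_cancel_left,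
            cs.simple_mul_simple_self] using this
        simp only [hx, if_false, h2, Prod.mk.injEq]
        refine ⟨?_, trivial⟩
        simp [mul_assoc, cs.simple_mul_simple_cancel_left])

lemma eta_apply (i : B) (p : W × ℤˣ) :
    eta cs i p = (σ i * p.1 * σ i, if p.1 = σ i then -p.2 else p.2) := rfl

/-- Product of `eta` over a word. -/
lemma prodEta (ω : List B) (p : W × ℤˣ) :
    ((ω.map (eta cs)).prod) p = (π ω * p.1 * (π ω)⁻¹, p.2 * sgn (ris ω) p.1) := by
  induction ω generalizing p with
  | nil => simp
  | cons i ω ih =>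
    have hris : ris (i :: ω) = ((π ω)⁻¹ * σ i * π ω) :: ris ω := rfl
    rw [map_cons, prod_cons, Equiv.Perm.mul_apply, ih, eta_apply]
    rw [hris, sgn_cons, cs.wordProd_cons]
    have hcond : (π ω * p.1 * (π ω)⁻¹ = σ i) ↔ ((π ω)⁻¹ * σ i * π ω = p.1) := by
      constructor
      · intro h
        rw [← h]
        simp [mul_assoc]
      · intro h
        rw [← h]
        simp [mul_assoc]
    simp only [Prod.mk.injEq]
    refine ⟨by simp [mul_assoc, mul_inv_rev, cs.inv_simple], ?_⟩
    by_cases hc : π ω * p.1 * (π ω)⁻¹ = σ i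
    · rw [if_pos hc, if_pos (hcond.mp hc)]
      simp [mul_neg, neg_mul]
    · rw [if_neg hc, if_neg (fun h => hc (hcond.mpr h))]
      simp

/-- Commutation of alternating word product with the rotation. -/
lemma alt_rot (i j : B) : ∀ n : ℕ,
    π (alternatingWord i j n) * (σ i * σ j)
      = (if Even n then σ i * σ j else σ j * σ i) * π (alternatingWord i j n)
  | 0 => by simp [alternatingWord]
  | (n + 1) => by
    have ih := alt_rot i j n
    rcases Nat.even_or_odd n with he | ho
    · have h0 : Even n := he
      have h1 : ¬ Even (n + 1) := by rw [Nat.even_add_one]; exact not_not_intro h0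
      rw [alternatingWord_succ', if_pos h0, cs.wordProd_cons, mul_assoc, ih, if_pos h0, if_neg h1]
      simp [mul_assoc]
    · have h0 : ¬ Even n := by rw [Nat.even_iff]; rw [Nat.odd_iff] at ho; omega
      have h1 : Even (n + 1) := by rw [Nat.even_add_one]; exact h0
      rw [alternatingWord_succ', if_neg h0, cs.wordProd_cons, mul_assoc, ih, if_neg h0, if_pos h1]
      simp [mul_assoc]

/-- Key identity: moving the leading letter across the alternating word. -/
lemma alt_move (i j : B) : ∀ n : ℕ,
    π (alternatingWord i j n) * (σ j * (σ i * σ j) ^ n)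
      = σ (if Even n then j else i) * π (alternatingWord i j n)
  | 0 => by simp [alternatingWord]
  | (n + 1) => by
    have ih := alt_move i j n
    have hr := alt_rot cs i j n
    rcases Nat.even_or_odd n with he | ho
    · have h1 : ¬ Even (n + 1) := by rw [Nat.even_add_one]; exact not_not_intro he
      rw [alternatingWord_succ', if_pos he, cs.wordProd_cons, if_neg h1, pow_succ]
      calc σ j * π (alternatingWord i j n) * (σ j * ((σ i * σ j) ^ n * (σ i * σ j)))
          = σ j * (π (alternatingWord i j n) * (σ j * (σ i * σ j) ^ n) * (σ i * σ j)) := by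
            simp [mul_assoc]
        _ = σ j * (σ (if Even n then j else i) * π (alternatingWord i j n) * (σ i * σ j)) := by
            rw [ih]
        _ = π (alternatingWord i j n) * (σ i * σ j) := by
            rw [if_pos he]
            simp only [mul_assoc]
            rw [cs.simple_mul_simple_cancel_left]
        _ = σ i * (σ j * π (alternatingWord i j n)) := by
            rw [hr, if_pos he, mul_assoc]
    · have h0 : ¬ Even n := by rw [Nat.even_iff]; rw [Nat.odd_iff] at ho; omega
      have h1 : Even (n + 1) := by rw [Nat.even_add_one]; exact h0
      rw [alternatingWord_succ', if_neg h0, cs.wordProd_cons, if_pos h1, pow_succ]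
      calc σ i * π (alternatingWord i j n) * (σ j * ((σ i * σ j) ^ n * (σ i * σ j)))
          = σ i * (π (alternatingWord i j n) * (σ j * (σ i * σ j) ^ n) * (σ i * σ j)) := by
            simp [mul_assoc]
        _ = σ i * (σ (if Even n then j else i) * π (alternatingWord i j n) * (σ i * σ j)) := by
            rw [ih]
        _ = π (alternatingWord i j n) * (σ i * σ j) := by
            rw [if_neg h0]
            simp only [mul_assoc]
            rw [cs.simple_mul_simple_cancel_left]
        _ = σ j * (σ i * π (alternatingWord i j n)) := by
            rw [hr, if_neg h0, mul_assoc]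

/-- The conjugation identity. -/
lemma conj_alt (i j : B) (n : ℕ) :
    (π (alternatingWord i j n))⁻¹ * σ (if Even n then j else i) * π (alternatingWord i j n)
      = σ j * (σ i * σ j) ^ n := by
  have h := alt_move cs i j n
  rw [mul_assoc, ← h]
  rw [← mul_assoc, inv_mul_cancel, one_mul]

/-- The right inversion sequence of an alternating word. -/
lemma ris_alt (i j : B) : ∀ n : ℕ,
    ris (alternatingWord i j n)
      = (List.range n).map (fun k => σ j * (σ i * σ j) ^ (n - 1 - k))
  | 0 => by simp [alternatingWord]
  | (n + 1) => by
    rw [alternatingWord_succ' i j n]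
    have hcons : ris ((if Even n then j else i) :: alternatingWord i j n)
        = ((π (alternatingWord i j n))⁻¹ * σ (if Even n then j else i)
            * π (alternatingWord i j n)) :: ris (alternatingWord i j n) := rfl
    rw [hcons, conj_alt, ris_alt i j n, List.range_succ_eq_map]
    simp only [map_cons, map_map]
    have e0 : n + 1 - 1 - 0 = n := by omega
    rw [e0]
    congr 1
    apply List.map_congr_left
    intro a _
    simp only [Function.comp_apply]
    have e1 : n + 1 - 1 - Nat.succ a = n - 1 - a := by omega
    rw [e1]

/-- `eta` is liftable. -/
lemma eta_liftable : M.IsLiftable (eta cs) := by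
  intro i j
  have key : ∀ m : ℕ, ((alternatingWord i j (2 * m)).map (eta cs)).prod
      = (eta cs i * eta cs j) ^ m := by
    intro m
    induction m with
    | zero => simp [alternatingWord]
    | succ m ih =>
      have h1 : 2 * (m + 1) = (2 * m + 1) + 1 := by omega
      have hodd : ¬ Even (2 * m + 1) := by rw [Nat.even_iff]; omega
      have heven : Even (2 * m) := by rw [Nat.even_iff]; omega
      rw [h1, alternatingWord_succ' i j, alternatingWord_succ' i j]
      rw [if_neg hodd, if_pos heven]
      rw [map_cons, map_cons, prod_cons, prod_cons, ih, pow_succ']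
      rw [← mul_assoc]
  have hpi : π (alternatingWord i j (2 * M i j)) = 1 := by
    rw [cs.prod_alternatingWord_eq_mul_pow]
    rw [if_pos (by rw [Nat.even_iff]; omega : Even (2 * M i j))]
    have h2 : 2 * M i j / 2 = M i j := by omega
    rw [h2, one_mul, cs.simple_mul_simple_pow]
  refine Equiv.ext fun p => ?_
  rw [← key (M i j), prodEta]
  have hrisplit : sgn (ris (alternatingWord i j (2 * M i j))) p.1 = 1 := by
    rw [ris_alt]
    have h2 : 2 * M i j = M i j + M i j := by omega
    rw [h2, List.range_add, List.map_append]
    rw [sgn_append]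
    have heq : (List.range (M i j)).map
          (fun k => σ j * (σ i * σ j) ^ (M i j + M i j - 1 - k))
        = (List.range (M i j)).map
          ((fun k => σ j * (σ i * σ j) ^ (M i j + M i j - 1 - k)) ∘ (fun k => M i j + k)) := by
      apply List.map_congr_left
      intro a ha
      rw [List.mem_range] at ha
      simp only [Function.comp_apply]
      congr 1
      have h3 : M i j + M i j - 1 - a = (M i j + M i j - 1 - (M i j + a)) + M i j := by omega
      rw [h3, pow_add, cs.simple_mul_simple_pow, mul_one]
    have hBA : List.map (fun k => σ j * (σ i * σ j) ^ (M i j + M i j - 1 - k))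
          ((List.range (M i j)).map (fun x => M i j + x))
        = (List.range (M i j)).map
          (fun k => σ j * (σ i * σ j) ^ (M i j + M i j - 1 - k)) := by
      rw [List.map_map, ← heq]
    rw [hBA]
    exact Int.units_mul_self _
  rw [hpi, hrisplit, mul_one]
  simp [Equiv.Perm.one_apply]

/-- The reflection-sign homomorphism. -/
noncomputable def phi : W →* Equiv.Perm (W × ℤˣ) := cs.lift ⟨eta cs, eta_liftable cs⟩

lemma phi_simple (i : B) : phi cs (σ i) = eta cs i := by
  simp [phi]

lemma phi_wordProd (ω : List B) (p : W × ℤˣ) :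
    phi cs (π ω) p = (π ω * p.1 * (π ω)⁻¹, p.2 * sgn (ris ω) p.1) := by
  rw [← prodEta]
  congr 1
  induction ω with
  | nil => simp
  | cons i ω ih =>
    rw [cs.wordProd_cons, map_mul, phi_simple, map_cons, prod_cons, ih]

/-- The sign cocycle. -/
noncomputable def eps (w t : W) : ℤˣ := (phi cs w (t, 1)).2

lemma eps_wordProd (ω : List B) (t : W) : eps cs (π ω) t = sgn (ris ω) t := by
  rw [eps, phi_wordProd, one_mul]

lemma phi_apply (w : W) (p : W × ℤˣ) :
    phi cs w p = (w * p.1 * w⁻¹, p.2 * eps cs w p.1) := by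
  obtain ⟨ω, _, rfl⟩ := cs.exists_reduced_word' w
  rw [phi_wordProd, eps_wordProd]

lemma eps_one (t : W) : eps cs 1 t = 1 := by
  rw [eps, map_one]
  rfl

lemma eps_mul (u v t : W) : eps cs (u * v) t = eps cs v t * eps cs u (v * t * v⁻¹) := by
  rw [eps, map_mul, Equiv.Perm.mul_apply, phi_apply cs v, phi_apply cs u]
  simp [eps]

lemma eps_simple (i : B) (t : W) :
    eps cs (σ i) t = if t = σ i then -1 else 1 := by
  rw [eps, phi_simple, eta_apply]

/-- If the sign is `-1`, then `t` is a right inversion. -/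
lemma isRightInversion_of_eps {w t : W} (h : eps cs w t = -1) :
    cs.IsRightInversion w t := by
  obtain ⟨ω, hred, rfl⟩ := cs.exists_reduced_word' w
  rw [eps_wordProd] at h
  have hmem : t ∈ ris ω := mem_of_sgn_ne_one (by rw [h]; decide)
  exact cs.isRightInversion_of_mem_rightInvSeq hred hmem

lemma eps_self {t : W} (ht : cs.IsReflection t) : eps cs t t = -1 := by
  obtain ⟨u, i, rfl⟩ := ht
  have h1 : eps cs u (σ i) * eps cs u⁻¹ (u * σ i * u⁻¹) = 1 := by
    rw [← eps_mul, inv_mul_cancel, eps_one]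
  have h2 : u⁻¹ * (u * σ i * u⁻¹) * u⁻¹⁻¹ = σ i := by
    simp [mul_assoc]
  have h4 : σ i * σ i * (σ i)⁻¹ = σ i := by
    rw [cs.simple_mul_simple_self, one_mul, cs.inv_simple]
  calc eps cs (u * σ i * u⁻¹) (u * σ i * u⁻¹)
      = eps cs u⁻¹ (u * σ i * u⁻¹)
          * eps cs (u * σ i) (u⁻¹ * (u * σ i * u⁻¹) * u⁻¹⁻¹) := eps_mul ..
    _ = eps cs u⁻¹ (u * σ i * u⁻¹) * eps cs (u * σ i) (σ i) := by rw [h2]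
    _ = eps cs u⁻¹ (u * σ i * u⁻¹)
          * (eps cs (σ i) (σ i) * eps cs u (σ i * σ i * (σ i)⁻¹)) := by rw [eps_mul]
    _ = eps cs u⁻¹ (u * σ i * u⁻¹) * (-1 * eps cs u (σ i)) := by
        rw [h4, eps_simple, if_pos rfl]
    _ = -(eps cs u⁻¹ (u * σ i * u⁻¹) * eps cs u (σ i)) := by rw [neg_one_mul, mul_neg]
    _ = -1 := by rw [mul_comm, h1]

lemma eps_of_isRightInversion {w t : W} (ht : cs.IsReflection t)
    (h : cs.length (w * t) < cs.length w) : eps cs w t = -1 := by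
  rcases Int.units_eq_one_or (eps cs w t) with h1 | h1
  · exfalso
    have hwt : eps cs (w * t) t = -1 := by
      have e1 : eps cs ((w * t) * t) t = eps cs t t * eps cs (w * t) (t * t * t⁻¹) := eps_mul ..
      have ht3 : t * t * t⁻¹ = t := by rw [ht.mul_self, one_mul, ht.inv]
      rw [ht3, mul_assoc, ht.mul_self, mul_one, eps_self cs ht, h1] at e1
      rcases Int.units_eq_one_or (eps cs (w * t) t) with h2 | h2
      · rw [h2, mul_one] at e1
        exact absurd e1 (by decide)
      · exact h2
    have hlt := (isRightInversion_of_eps cs hwt).2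
    rw [mul_assoc, ht.mul_self, mul_one] at hlt
    omega
  · exact h1

/-- Strong exchange, membership form. -/
lemma strong_exchange_mem {ω : List B} (hred : cs.IsReduced ω) {t : W}
    (ht : cs.IsReflection t) (h : cs.length (π ω * t) < cs.length (π ω)) :
    t ∈ ris ω := by
  have := eps_of_isRightInversion cs ht h
  rw [eps_wordProd] at this
  exact mem_of_sgn_ne_one (by rw [this]; decide)

/-- Strong exchange, erase form. -/
lemma strong_exchange {ω : List B} (hred : cs.IsReduced ω) {t : W}
    (ht : cs.IsReflection t) (h : cs.length (π ω * t) < cs.length (π ω)) :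
    ∃ j < ω.length, π ω * t = π (ω.eraseIdx j) := by
  have hmem := strong_exchange_mem cs hred ht h
  obtain ⟨j, hj, hget⟩ := List.mem_iff_getElem.mp hmem
  rw [cs.length_rightInvSeq] at hj
  refine ⟨j, hj, ?_⟩
  have := cs.wordProd_mul_getD_rightInvSeq ω j
  rwa [List.getD_eq_getElem _ _ (by rw [cs.length_rightInvSeq]; exact hj), hget] at this

/-! ### The chain order -/

/-- One step in the Bruhat chain order. -/
def lt1 (u w : W) : Prop :=
  (∃ t, cs.IsReflection t ∧ w = u * t) ∧ ℒ u < ℒ w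

/-- The Bruhat chain order. -/
def le' (u v : W) : Prop := Relation.ReflTransGen (lt1 cs) u v

lemma le'_refl (u : W) : le' cs u u := Relation.ReflTransGen.refl

lemma le'_trans {u v w : W} (h1 : le' cs u v) (h2 : le' cs v w) : le' cs u w :=
  Relation.ReflTransGen.trans h1 h2

lemma lt1_simple_asc {w : W} {i : B} (h : ℒ w < ℒ (w * σ i)) : lt1 cs w (w * σ i) :=
  ⟨⟨σ i, cs.isReflection_simple i, rfl⟩, h⟩

lemma lt1_simple_desc {w : W} {i : B} (h : ℒ (w * σ i) < ℒ w) : lt1 cs (w * σ i) w :=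
  ⟨⟨σ i, cs.isReflection_simple i, (cs.simple_mul_simple_cancel_right i).symm⟩, h⟩

/-- Deletion property: every word has a reduced sublist with the same product. -/
lemma exists_reduced_sublist (ω : List B) :
    ∃ ω', ω'.Sublist ω ∧ cs.IsReduced ω' ∧ π ω' = π ω := by
  generalize hl : ω.length = n
  induction n using Nat.strong_induction_on generalizing ω with
  | _ n IH =>
  by_cases hred : cs.IsReduced ω
  · exact ⟨ω, List.Sublist.refl ω, hred, rfl⟩
  have hlen1 : 1 ≤ ω.length := by
    rcases Nat.eq_zero_or_pos ω.length with h0 | h0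
    · exfalso
      apply hred
      rw [List.length_eq_zero_iff] at h0
      subst h0
      simp [CoxeterSystem.IsReduced]
    · exact h0
  have hex : ∃ k, ¬ cs.IsReduced (ω.take (k+1)) := by
    refine ⟨ω.length - 1, ?_⟩
    rw [show ω.length - 1 + 1 = ω.length by omega, List.take_length]
    exact hred
  have hk : ¬ cs.IsReduced (ω.take (Nat.find hex + 1)) := Nat.find_spec hex
  set k := Nat.find hex with hkdef
  have hklt : k < ω.length := by
    have : k ≤ ω.length - 1 := Nat.find_min' hex (by
      rw [show ω.length - 1 + 1 = ω.length by omega, List.take_length]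
      exact hred)
    omega
  have hkred : cs.IsReduced (ω.take k) := by
    rcases Nat.eq_zero_or_pos k with h0 | h0
    · rw [h0]
      simp [CoxeterSystem.IsReduced]
    · have hmin := Nat.find_min hex (show k - 1 < k by omega)
      rw [not_not, show k - 1 + 1 = k by omega] at hmin
      exact hmin
  have htake : ω.take (k+1) = ω.take k ++ [ω[k]] := by
    rw [List.take_succ, List.getElem?_eq_getElem hklt]
    rfl
  have hlk : ℒ (π (ω.take k)) = k := by
    have h1 : ℒ (π (ω.take k)) = (ω.take k).length := hkred
    rwa [List.length_take, min_eq_left (le_of_lt hklt)] at h1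
  have hsplit : π (ω.take (k+1)) = π (ω.take k) * σ (ω[k]) := by
    rw [htake, cs.wordProd_append, cs.wordProd_singleton]
  have hlt : ℒ (π (ω.take k) * σ (ω[k])) < ℒ (π (ω.take k)) := by
    have hne : ℒ (π (ω.take (k+1))) ≠ k + 1 := by
      intro hcon
      apply hk
      show ℒ (π (ω.take (k+1))) = (ω.take (k+1)).length
      rw [hcon, List.length_take, min_eq_left (by omega)]
    rcases cs.length_mul_simple (π (ω.take k)) (ω[k]) with hx | hx
    · rw [hsplit, hx, hlk] at hne
      omega
    · omega
  obtain ⟨j, hj, herase⟩ := strong_exchange cs hkred (cs.isReflection_simple (ω[k])) hlt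
  set ω₂ := (ω.take k).eraseIdx j ++ ω.drop (k+1) with hω₂
  have hπ₂ : π ω₂ = π ω := by
    rw [hω₂, cs.wordProd_append, ← herase]
    conv_rhs => rw [← List.take_append_drop (k+1) ω]
    rw [cs.wordProd_append, hsplit]
  have hsub₂ : ω₂.Sublist ω := by
    have s1 : ((ω.take k).eraseIdx j).Sublist (ω.take k) := List.eraseIdx_sublist _ j
    have s2 : (ω.take k).Sublist (ω.take (k+1)) := by
      rw [htake]
      exact List.sublist_append_left _ _
    have s3 : ω₂.Sublist (ω.take (k+1) ++ ω.drop (k+1)) :=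
      List.Sublist.append (s1.trans s2) (List.Sublist.refl _)
    rwa [List.take_append_drop] at s3
  have hlen₂ : ω₂.length < n := by
    have e1 : ((ω.take k).eraseIdx j).length + 1 = (ω.take k).length :=
      List.length_eraseIdx_add_one hj
    have e2 : (ω.take k).length = k := by
      rw [List.length_take, min_eq_left (le_of_lt hklt)]
    have e3 : (ω.drop (k+1)).length = ω.length - (k+1) := by
      rw [List.length_drop]
    rw [hω₂, List.length_append]
    omega
  obtain ⟨ζ, hζs, hζred, hζπ⟩ := IH ω₂.length hlen₂ ω₂ rfl
  exact ⟨ζ, hζs.trans hsub₂, hζred, by rw [hζπ, hπ₂]⟩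

/-- From the chain order to reduced sublists of an arbitrary reduced word. -/
lemma sublist_of_le' {u v : W} (h : le' cs u v) :
    ∀ ζ : List B, cs.IsReduced ζ → π ζ = v →
      ∃ ζ', ζ'.Sublist ζ ∧ cs.IsReduced ζ' ∧ π ζ' = u := by
  induction h using Relation.ReflTransGen.head_induction_on with
  | refl => exact fun ζ h1 h2 => ⟨ζ, List.Sublist.refl ζ, h1, h2⟩
  | head hstep _ ih =>
    intro ζ hζ hπ
    obtain ⟨ζ₂, hs2, hr2, hπ2⟩ := ih ζ hζ hπ
    obtain ⟨⟨t, hrt, hw⟩, hlen⟩ := hstep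
    rename_i a c _
    have hac : a = c * t := by rw [hw, mul_assoc, hrt.mul_self, mul_one]
    have hlt : ℒ (π ζ₂ * t) < ℒ (π ζ₂) := by
      rw [hπ2, ← hac]
      exact hlen
    obtain ⟨j, hj, herase⟩ := strong_exchange cs hr2 hrt hlt
    obtain ⟨ζ', hs', hr', hπ'⟩ := exists_reduced_sublist cs (ζ₂.eraseIdx j)
    refine ⟨ζ', (hs'.trans (List.eraseIdx_sublist ζ₂ j)).trans hs2, hr', ?_⟩
    rw [hπ', ← herase, hπ2, ← hac]

/-- Property Z (Deodhar). -/
lemma Zlem : ∀ n : ℕ, ∀ v : W, ℒ v = n → ∀ i : B, ℒ (v * σ i) < ℒ v →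
    ∀ u : W, le' cs u v → le' cs u (v * σ i) ∨ le' cs (u * σ i) (v * σ i) := by
  intro n
  induction n using Nat.strong_induction_on with
  | _ n IH =>
  intro v hn i hdesc u hle
  rcases Relation.ReflTransGen.cases_tail hle with rfl | ⟨w, huw, hstep⟩
  · right
    exact le'_refl cs _
  obtain ⟨⟨t, hrt, hvwt⟩, hlw⟩ := hstep
  -- the single-edge analysis
  obtain ⟨ζ₁, hζ₁red, hζ₁π⟩ := cs.exists_reduced_word' (v * σ i)
  have hlv' : ℒ (v * σ i) + 1 = ℒ v := by
    rcases cs.length_mul_simple v i with h | h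
    · omega
    · exact h
  have hζπ : π (ζ₁.concat i) = v := by
    rw [cs.wordProd_concat, ← hζ₁π, cs.simple_mul_simple_cancel_right]
  have hζred : cs.IsReduced (ζ₁.concat i) := by
    show ℒ (π (ζ₁.concat i)) = _
    rw [hζπ, List.length_concat]
    have : ℒ (v * σ i) = ζ₁.length := by rw [hζ₁π]; exact hζ₁red
    omega
  have hvt : ℒ (π (ζ₁.concat i) * t) < ℒ (π (ζ₁.concat i)) := by
    rw [hζπ]
    have hwvt : v * t = w := by rw [hvwt, mul_assoc, hrt.mul_self, mul_one]
    rw [hwvt]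
    exact hlw
  have hmem := strong_exchange_mem cs hζred hrt hvt
  rw [cs.rightInvSeq_concat, List.concat_eq_append, List.mem_append] at hmem
  rcases hmem with hmem | hmem
  · -- conjugated part
    rw [List.mem_map] at hmem
    obtain ⟨t₁, ht₁mem, ht₁⟩ := hmem
    have ht₁inv := cs.isRightInversion_of_mem_rightInvSeq hζ₁red ht₁mem
    have hteq : t = σ i * t₁ * σ i := by
      rw [← ht₁, MulAut.conj_apply, cs.inv_simple]
    have hkey : w * σ i = (v * σ i) * t₁ := by
      rw [hvwt, hteq]
      simp [mul_assoc, cs.simple_mul_simple_cancel_left, cs.simple_mul_simple_self,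
        ht₁inv.1.mul_self]
    have hlen2 : ℒ (w * σ i) < ℒ (v * σ i) := by
      rw [hkey, hζ₁π]
      exact ht₁inv.2
    have hedge : lt1 cs (w * σ i) (v * σ i) := by
      refine ⟨⟨t₁, ht₁inv.1, ?_⟩, hlen2⟩
      rw [hkey, mul_assoc, ht₁inv.1.mul_self, mul_one]
    rcases cs.length_mul_simple w i with hwi | hwi
    · -- ascent at w
      left
      exact (huw.tail (lt1_simple_asc cs (by omega))).tail hedge
    · -- descent at w
      rcases IH (ℒ w) (by omega) w rfl i (by omega) u huw with hA | hB
      · left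
        exact hA.tail hedge
      · right
        exact hB.tail hedge
  · -- t = σ i
    rw [List.mem_singleton] at hmem
    left
    have : w = v * σ i := by rw [hvwt, hmem, cs.simple_mul_simple_cancel_right]
    rwa [this] at huw

/-- Monotonicity of right multiplication by an ascent. -/
lemma Mon : ∀ n : ℕ, ∀ v : W, ℒ v = n → ∀ i : B, ℒ v < ℒ (v * σ i) →
    ∀ u : W, le' cs u v → le' cs (u * σ i) (v * σ i) := by
  intro n
  induction n using Nat.strong_induction_on with
  | _ n IH =>
  intro v hn i hasc u hle
  rcases Relation.ReflTransGen.cases_tail hle with rfl | ⟨w, huw, hstep⟩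
  · exact le'_refl cs _
  obtain ⟨⟨t, hrt, hvwt⟩, hlw⟩ := hstep
  have hvi : ℒ (v * σ i) = ℒ v + 1 := by
    rcases cs.length_mul_simple v i with h | h
    · exact h
    · omega
  have hedgewv : lt1 cs w v := ⟨⟨t, hrt, hvwt⟩, hlw⟩
  rcases cs.length_mul_simple w i with hwi | hwi
  · -- ascent at w
    have ih := IH (ℒ w) (by omega) w rfl i (by omega) u huw
    have hrefl2 : cs.IsReflection (σ i * t * σ i) := by
      have := hrt.conj (σ i)
      rwa [cs.inv_simple] at this
    have hkey : v * σ i = (w * σ i) * (σ i * t * σ i) := by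
      rw [hvwt]
      simp [mul_assoc, cs.simple_mul_simple_self]
    exact ih.tail ⟨⟨σ i * t * σ i, hrefl2, hkey⟩, by omega⟩
  · -- descent at w
    rcases cs.length_mul_simple u i with hui | hui
    · -- ascent at u
      rcases Zlem cs (ℒ w) w rfl i (by omega) u huw with hA | hB
      · have ih := IH (ℒ (w * σ i)) (by omega) (w * σ i) rfl i
          (by rw [cs.simple_mul_simple_cancel_right]; omega) u hA
        rw [cs.simple_mul_simple_cancel_right] at ih
        exact (ih.tail hedgewv).tail (lt1_simple_asc cs (by omega))
      · have e1 : lt1 cs (w * σ i) w := lt1_simple_desc cs (by omega)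
        exact ((hB.tail e1).tail hedgewv).tail (lt1_simple_asc cs (by omega))
    · -- descent at u
      have e0 : lt1 cs (u * σ i) u := lt1_simple_desc cs (by omega)
      exact (((Relation.ReflTransGen.single e0).trans huw).tail hedgewv).tail
        (lt1_simple_asc cs (by omega))

/-- Subword gives chain order. -/
lemma le'_of_sublist : ∀ ω ω' : List B, cs.IsReduced ω → cs.IsReduced ω' → ω'.Sublist ω →
    le' cs (π ω') (π ω) := by
  intro ω
  induction ω using List.reverseRecOn with
  | nil =>
    intro ω' _ _ hs
    rw [List.sublist_nil.mp hs]
    exact le'_refl cs _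
  | append_singleton ω₁ i ih =>
    intro ω' hred hred' hs
    have hred₁ : cs.IsReduced ω₁ := by
      have := hred.take ω₁.length
      rwa [List.take_left] at this
    have hasc : ℒ (π ω₁) < ℒ (π (ω₁ ++ [i])) := by
      have h1 : ℒ (π (ω₁ ++ [i])) = ω₁.length + 1 := by
        have := hred
        rw [CoxeterSystem.IsReduced, List.length_append] at this
        simpa using this
      have h2 : ℒ (π ω₁) = ω₁.length := hred₁
      omega
    rcases List.sublist_append_iff.mp hs with ⟨l₁, l₂, rfl, hs₁, hs₂⟩
    have hred'l₁ : cs.IsReduced l₁ := by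
      have := hred'.take l₁.length
      rwa [List.take_left] at this
    rcases List.sublist_singleton.mp hs₂ with rfl | rfl
    · rw [List.append_nil] at hred' ⊢
      have h0 := ih l₁ hred₁ hred' hs₁
      rw [cs.wordProd_append, cs.wordProd_singleton]
      exact h0.tail (lt1_simple_asc cs (by rwa [← cs.wordProd_singleton i, ← cs.wordProd_append]))
    · have h0 := ih l₁ hred₁ hred'l₁ hs₁
      have hasc' : ℒ (π l₁) < ℒ (π l₁ * σ i) := by
        have h1 : ℒ (π (l₁ ++ [i])) = l₁.length + 1 := by
          have := hred'
          rw [CoxeterSystem.IsReduced, List.length_append] at this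
          simpa using this
        have h2 : ℒ (π l₁) = l₁.length := hred'l₁
        rw [cs.wordProd_append, cs.wordProd_singleton] at h1
        omega
      have := Mon cs (ℒ (π ω₁)) (π ω₁) rfl i (by
        rwa [← cs.wordProd_singleton i, ← cs.wordProd_append]) (π l₁) h0
      rwa [cs.wordProd_append, cs.wordProd_singleton, cs.wordProd_append,
        cs.wordProd_singleton]

/-! ### Bridge to `bruhatLE` -/

lemma bruhatLE_iff_le' {u v : W} : bruhatLE cs u v ↔ le' cs u v := by
  constructor
  · rintro ⟨ω, hred, rfl, ω', hsub, hred', rfl⟩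
    exact le'_of_sublist cs ω ω' hred hred' hsub
  · intro h
    obtain ⟨ζ, hζred, hζπ⟩ := cs.exists_reduced_word' v
    obtain ⟨ζ', h1, h2, h3⟩ := sublist_of_le' cs h ζ hζred hζπ.symm
    exact ⟨ζ, hζred, hζπ.symm, ζ', h1, h2, h3⟩

lemma bruhat_refl (u : W) : bruhatLE cs u u := (bruhatLE_iff_le' cs).mpr (le'_refl cs u)

lemma bruhat_trans {u v w : W} (h1 : bruhatLE cs u v) (h2 : bruhatLE cs v w) :
    bruhatLE cs u w :=
  (bruhatLE_iff_le' cs).mpr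
    (le'_trans cs ((bruhatLE_iff_le' cs).mp h1) ((bruhatLE_iff_le' cs).mp h2))

lemma bruhat_le_one {u : W} (h : bruhatLE cs u 1) : u = 1 := by
  obtain ⟨ω, hred, hπ, ω', hsub, hred', hπ'⟩ := h
  have hlen : ω.length = 0 := by
    have h1 : ℒ (π ω) = ω.length := hred
    rw [hπ, cs.length_one] at h1
    omega
  rw [List.length_eq_zero_iff] at hlen
  subst hlen
  rw [List.sublist_nil.mp hsub] at hπ'
  rw [← hπ']
  simp

/-- Right inversion sequence of a concatenation. -/
lemma ris_append : ∀ (α β : List B),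
    ris (α ++ β) = (ris α).map (fun t => (π β)⁻¹ * t * π β) ++ ris β
  | [], β => by simp
  | (i :: α), β => by
    have h1 : ris (i :: (α ++ β))
        = ((π (α ++ β))⁻¹ * σ i * π (α ++ β)) :: ris (α ++ β) := rfl
    have h2 : ris (i :: α) = ((π α)⁻¹ * σ i * π α) :: ris α := rfl
    rw [List.cons_append, h1, ris_append α β, h2, List.map_cons, List.cons_append]
    congr 1
    rw [cs.wordProd_append, mul_inv_rev]
    simp [mul_assoc]

/-! ### The Demazure product -/

lemma demazure : ∀ n : ℕ, ∀ v : W, ℒ v = n → ∀ u : W, ∃ m : W,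
    (∃ a, bruhatLE cs a u ∧ m = a * v ∧ ℒ m = ℒ a + ℒ v) ∧
    (∃ b, bruhatLE cs b v ∧ m = u * b ∧ ℒ m = ℒ u + ℒ b) ∧
    (∀ u' v', bruhatLE cs u' u → bruhatLE cs v' v → bruhatLE cs (u' * v') m) := by
  intro n
  induction n using Nat.strong_induction_on with
  | _ n IH =>
  intro v hn u
  rcases Nat.eq_zero_or_pos n with h0 | hpos
  · have hv : v = 1 := by
      rw [← cs.length_eq_zero_iff]
      omega
    subst hv
    refine ⟨u, ⟨u, bruhat_refl cs u, by simp, by simp⟩,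
      ⟨1, bruhat_refl cs 1, by simp, by simp⟩, ?_⟩
    intro u' v' hu' hv'
    rw [bruhat_le_one cs hv', mul_one]
    exact hu'
  · have hv1 : v ≠ 1 := by
      intro h
      rw [h, cs.length_one] at hn
      omega
    obtain ⟨i, hi⟩ := cs.exists_rightDescent_of_ne_one hv1
    have hdesc : ℒ (v * σ i) < ℒ v := hi
    have hlv1 : ℒ (v * σ i) + 1 = ℒ v := by
      rcases cs.length_mul_simple v i with h | h
      · omega
      · exact h
    obtain ⟨v₁, hv₁⟩ : ∃ v₁, v₁ = v * σ i := ⟨_, rfl⟩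
    rw [← hv₁] at hdesc hlv1
    have hvv1 : v = v₁ * σ i := by
      rw [hv₁, cs.simple_mul_simple_cancel_right]
    obtain ⟨m₁, ⟨a, hab, ham, hal⟩, ⟨b, hbb, hbm, hbl⟩, hupper⟩ :=
      IH (ℒ v₁) (by omega) v₁ rfl u
    rcases cs.length_mul_simple m₁ i with hasc | hdesc₁
    · -- ascent : m := m₁ * σ i
      have hbs : ℒ (b * σ i) = ℒ b + 1 := by
        have h1 : ℒ (u * (b * σ i)) ≤ ℒ u + ℒ (b * σ i) := cs.length_mul_le _ _
        rw [← mul_assoc, ← hbm] at h1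
        rcases cs.length_mul_simple b i with h2 | h2
        · exact h2
        · omega
      refine ⟨m₁ * σ i, ⟨a, hab, by rw [ham, hvv1, mul_assoc], by omega⟩,
        ⟨b * σ i, ?_, by rw [hbm, mul_assoc], by omega⟩, ?_⟩
      · apply (bruhatLE_iff_le' cs).mpr
        have hb' := (bruhatLE_iff_le' cs).mp hbb
        have hmon := Mon cs (ℒ v₁) v₁ rfl i (by rw [← hvv1]; omega) b hb'
        rwa [← hvv1] at hmon
      · intro u' v' hu' hv'
        have hv'le := (bruhatLE_iff_le' cs).mp hv'
        rcases Zlem cs (ℒ v) v rfl i (by rw [← hv₁]; omega) v' hv'le with hA | hB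
        · rw [← hv₁] at hA
          have h1 := hupper u' v' hu' ((bruhatLE_iff_le' cs).mpr hA)
          apply (bruhatLE_iff_le' cs).mpr
          exact ((bruhatLE_iff_le' cs).mp h1).tail (lt1_simple_asc cs (by omega))
        · rw [← hv₁] at hB
          have h1 := hupper u' (v' * σ i) hu' ((bruhatLE_iff_le' cs).mpr hB)
          have h1' := (bruhatLE_iff_le' cs).mp h1
          have huv : (u' * (v' * σ i)) * σ i = u' * v' := by
            rw [mul_assoc, cs.simple_mul_simple_cancel_right]
          apply (bruhatLE_iff_le' cs).mpr
          rcases cs.length_mul_simple (u' * (v' * σ i)) i with h2 | h2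
          · have hmon := Mon cs (ℒ m₁) m₁ rfl i (by omega) _ h1'
            rwa [huv] at hmon
          · have e0 : lt1 cs (u' * v') (u' * (v' * σ i)) := by
              rw [← huv]
              exact lt1_simple_desc cs (by omega)
            exact ((Relation.ReflTransGen.single e0).trans h1').tail
              (lt1_simple_asc cs (by omega))
    · -- descent : m := m₁
      obtain ⟨ωa, hωared, hωaπ⟩ := cs.exists_reduced_word' a
      obtain ⟨ωv, hωvred, hωvπ⟩ := cs.exists_reduced_word' v₁
      have hcatπ : π (ωa ++ ωv) = m₁ := by
        rw [cs.wordProd_append, ← hωaπ, ← hωvπ, ham]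
      have hla : ℒ a = ωa.length := by rw [hωaπ]; exact hωared
      have hlv : ℒ v₁ = ωv.length := by rw [hωvπ]; exact hωvred
      have hcatred : cs.IsReduced (ωa ++ ωv) := by
        show ℒ (π (ωa ++ ωv)) = _
        rw [hcatπ, List.length_append]
        omega
      have hinv : ℒ (π (ωa ++ ωv) * σ i) < ℒ (π (ωa ++ ωv)) := by
        rw [hcatπ]
        omega
      have hmem := strong_exchange_mem cs hcatred (cs.isReflection_simple i) hinv
      rw [ris_append, List.mem_append] at hmem
      rcases hmem with hmem | hmem
      swap
      · exfalso
        have hx := (cs.isRightInversion_of_mem_rightInvSeq hωvred hmem).2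
        rw [← hωvπ, ← hvv1] at hx
        omega
      obtain ⟨r, hrmem, hrconj⟩ := List.mem_map.mp hmem
      have hrinv := cs.isRightInversion_of_mem_rightInvSeq hωared hrmem
      have hlar : ℒ (a * r) < ℒ a := by
        have := hrinv.2
        rwa [← hωaπ] at this
      have hrv : r = v₁ * σ i * v₁⁻¹ := by
        rw [← hrconj, ← hωvπ]
        group
      have hmar : m₁ = (a * r) * v := by
        rw [hvv1, hrv, ham]
        simp only [mul_assoc, inv_mul_cancel_left]
        rw [cs.simple_mul_simple_self, mul_one]
      have hedgea : lt1 cs (a * r) a :=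
        ⟨⟨r, hrinv.1, by rw [mul_assoc, hrinv.1.mul_self, mul_one]⟩, hlar⟩
      have harle : bruhatLE cs (a * r) u :=
        (bruhatLE_iff_le' cs).mpr
          ((Relation.ReflTransGen.single hedgea).trans ((bruhatLE_iff_le' cs).mp hab))
      have hlenmar : ℒ m₁ = ℒ (a * r) + ℒ v := by
        have h1 : ℒ ((a * r) * v) ≤ ℒ (a * r) + ℒ v := cs.length_mul_le _ _
        rw [← hmar] at h1
        omega
      have hble : bruhatLE cs b v :=
        bruhat_trans cs hbb
          ((bruhatLE_iff_le' cs).mpr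
            (Relation.ReflTransGen.single ⟨⟨σ i, cs.isReflection_simple i, hvv1⟩, by omega⟩))
      refine ⟨m₁, ⟨a * r, harle, hmar, hlenmar⟩, ⟨b, hble, hbm, hbl⟩, ?_⟩
      intro u' v' hu' hv'
      have hv'le := (bruhatLE_iff_le' cs).mp hv'
      rcases Zlem cs (ℒ v) v rfl i (by rw [← hv₁]; omega) v' hv'le with hA | hB
      · rw [← hv₁] at hA
        exact hupper u' v' hu' ((bruhatLE_iff_le' cs).mpr hA)
      · rw [← hv₁] at hB
        have h1 := hupper u' (v' * σ i) hu' ((bruhatLE_iff_le' cs).mpr hB)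
        have h1' := (bruhatLE_iff_le' cs).mp h1
        have huv : (u' * (v' * σ i)) * σ i = u' * v' := by
          rw [mul_assoc, cs.simple_mul_simple_cancel_right]
        apply (bruhatLE_iff_le' cs).mpr
        rcases cs.length_mul_simple (u' * (v' * σ i)) i with h2 | h2
        · -- ascent at u' * (v' * σ i)
          rcases Zlem cs (ℒ m₁) m₁ rfl i (by omega) _ h1' with hC | hD
          · have hmon := Mon cs (ℒ (m₁ * σ i)) (m₁ * σ i) rfl i
              (by rw [cs.simple_mul_simple_cancel_right]; omega) _ hC
            rw [cs.simple_mul_simple_cancel_right, huv] at hmon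
            exact hmon
          · rw [huv] at hD
            exact hD.tail (lt1_simple_desc cs (by omega))
        · have e0 : lt1 cs (u' * v') (u' * (v' * σ i)) := by
            rw [← huv]
            exact lt1_simple_desc cs (by omega)
          exact (Relation.ReflTransGen.single e0).trans h1'

end BruhatAux

/-- The maxima of `{u'v : u' ≤ u}`, `{uv' : v' ≤ v}` and `{u'v' : u' ≤ u, v' ≤ v}`
all exist and coincide (the optimization operator `u ∘ v`). -/
theorem stmt1 {B W : Type*} [Group W] {M : CoxeterMatrix B} (cs : CoxeterSystem M W)
    (u v : W) :
    ∃ m : W,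
      ((∃ u' : W, bruhatLE cs u' u ∧ m = u' * v) ∧
        ∀ x : W, (∃ u' : W, bruhatLE cs u' u ∧ x = u' * v) → bruhatLE cs x m) ∧
      ((∃ v' : W, bruhatLE cs v' v ∧ m = u * v') ∧
        ∀ x : W, (∃ v' : W, bruhatLE cs v' v ∧ x = u * v') → bruhatLE cs x m) ∧
      ((∃ u' v' : W, bruhatLE cs u' u ∧ bruhatLE cs v' v ∧ m = u' * v') ∧
        ∀ x : W, (∃ u' v' : W, bruhatLE cs u' u ∧ bruhatLE cs v' v ∧ x = u' * v') →
          bruhatLE cs x m) := by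
  obtain ⟨m, ⟨a, hab, ham, _⟩, ⟨b, hbb, hbm, _⟩, hupper⟩ :=
    BruhatAux.demazure cs (cs.length v) v rfl u
  refine ⟨m, ⟨⟨a, hab, ham⟩, ?_⟩, ⟨⟨b, hbb, hbm⟩, ?_⟩,
    ⟨⟨a, v, hab, BruhatAux.bruhat_refl cs v, ham⟩, ?_⟩⟩
  · rintro x ⟨u', hu', rfl⟩
    exact hupper u' v hu' (BruhatAux.bruhat_refl cs v)
  · rintro x ⟨v', hv', rfl⟩
    exact hupper u v' (BruhatAux.bruhat_refl cs u) hv'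
  · rintro x ⟨u', v', hu', hv', rfl⟩
    exact hupper u' v' hu' hv'
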